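/- arXiv:1405.6594 — 4 statements merged into one kernel-verified Lean document; each statement's English description precedes it below -/
import Mathlib

section
/- [Proposition 1(a), sign-preserving noisy adder] Let Q̃ ≥ 1 be an integer and p ∈ [0,1]. Let c : ℤ → ℝ satisfy c(z) ≥ 0 for all z, c(z) = 0 for |z| > Q̃, and Σ_{z=−Q̃}^{Q̃} c(z) = 1. Set c⁻ = Σ_{z=−Q̃}^{−1} c(z) + c(0)/2 and c⁺ = c(0)/2 + Σ_{z=1}^{Q̃} c(z). Define C : {−Q̃,…,Q̃} → ℝ by C(z) = (1−p)·c(z) + (p/Q̃)·(c⁻ − c(z)) for z < 0, C(0) = (1−p)·c(0) + (p/Q̃)·(1 − c(0)), and C(z) = (1−p)·c(z) + (p/Q̃)·(c⁺ − c(z)) for z > 0. Then the error probability P_e = Σ_{z=−Q̃}^{−1} C(z) + C(0)/2 satisfies P_e ≥ p/(2Q̃). -/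
/-- Proposition 1(a): lower bound on the error probability for the
sign-preserving bitwise-XORed noisy adder. -/
theorem stmt1 (Qt : ℤ) (hQt : 1 ≤ Qt) (p : ℝ) (hp0 : 0 ≤ p) (hp1 : p ≤ 1)
    (c : ℤ → ℝ) (hc_nonneg : ∀ z, 0 ≤ c z)
    (hc_supp : ∀ z : ℤ, Qt < |z| → c z = 0)
    (hc_sum : ∑ z ∈ Finset.Icc (-Qt) Qt, c z = 1)
    (C : ℤ → ℝ)
    (hCneg : ∀ z : ℤ, -Qt ≤ z → z < 0 →
      C z = (1 - p) * c z +
        (p / (Qt : ℝ)) * ((∑ u ∈ Finset.Icc (-Qt) (-1), c u + c 0 / 2) - c z))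
    (hC0 : C 0 = (1 - p) * c 0 + (p / (Qt : ℝ)) * (1 - c 0))
    (hCpos : ∀ z : ℤ, 0 < z → z ≤ Qt →
      C z = (1 - p) * c z +
        (p / (Qt : ℝ)) * ((c 0 / 2 + ∑ u ∈ Finset.Icc 1 Qt, c u) - c z)) :
    ∑ z ∈ Finset.Icc (-Qt) (-1), C z + C 0 / 2 ≥ p / (2 * (Qt : ℝ)) := by
  have hQ : (1:ℝ) ≤ (Qt:ℝ) := by exact_mod_cast hQt
  have hQ0 : (0:ℝ) < (Qt:ℝ) := by linarith
  set S : ℝ := ∑ u ∈ Finset.Icc (-Qt) (-1), c u with hSdef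
  have hS0 : 0 ≤ S := Finset.sum_nonneg fun u _ => hc_nonneg u
  have hc00 : 0 ≤ c 0 := hc_nonneg 0
  have hcard : (Finset.Icc (-Qt) (-1)).card = Qt.toNat := by
    rw [Int.card_Icc]; omega
  have hsum : ∑ z ∈ Finset.Icc (-Qt) (-1), C z
      = (1 - p) * S + (p / (Qt:ℝ)) * ((Qt:ℝ) * (S + c 0 / 2) - S) := by
    have hcongr : ∀ z ∈ Finset.Icc (-Qt) (-1), C z
        = (1 - p) * c z + (p / (Qt:ℝ)) * ((S + c 0 / 2) - c z) := by
      intro z hz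
      simp only [Finset.mem_Icc] at hz
      exact hCneg z hz.1 (by omega)
    rw [Finset.sum_congr rfl hcongr, Finset.sum_add_distrib, ← Finset.mul_sum,
      ← Finset.mul_sum, Finset.sum_sub_distrib, Finset.sum_const, hcard,
      nsmul_eq_mul]
    have : ((Qt.toNat : ℕ) : ℝ) = (Qt : ℝ) := by
      exact_mod_cast Int.toNat_of_nonneg (by omega : (0:ℤ) ≤ Qt)
    rw [this]
  have hPe : ∑ z ∈ Finset.Icc (-Qt) (-1), C z + C 0 / 2
      = (S + c 0 / 2) * (1 - p / (Qt:ℝ)) + p / (2 * (Qt:ℝ)) := by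
    rw [hsum, hC0]
    field_simp
    ring
  rw [hPe]
  have hpQ : p / (Qt:ℝ) ≤ 1 := by
    rw [div_le_one hQ0]; linarith
  nlinarith [mul_nonneg (by linarith : (0:ℝ) ≤ S + c 0 / 2) (by linarith : (0:ℝ) ≤ 1 - p / (Qt:ℝ))]
end

section
/- [Proposition 1(b), full-depth noisy adder] Let Q̃ ≥ 1 be an integer and p ∈ [0,1] with p·(2Q̃ + 1) ≤ 2Q̃. Let c : ℤ → ℝ satisfy c(z) ≥ 0 for all z, c(z) = 0 for |z| > Q̃, and Σ_{z=−Q̃}^{Q̃} c(z) = 1. Set c⁻ = Σ_{z=−Q̃}^{−1} c(z) + c(0)/2. Define C : {−Q̃,…,Q̃} → ℝ by C(z) = (1−p)·c(z) + (p/(2Q̃))·(1 − c(z)) for every z ∈ {−Q̃,…,Q̃}. Then the error probability P_e = Σ_{z=−Q̃}^{−1} C(z) + C(0)/2 satisfies both P_e = p/2 + (1−p)·c⁻ + (p/(4Q̃))·(1 − 2c⁻) and P_e ≥ p/2 + p/(4Q̃). -/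
/-- Proposition 1(b): exact expression and lower bound on the error probability
for the full-depth bitwise-XORed noisy adder. -/
theorem stmt2 (Qt : ℤ) (hQt : 1 ≤ Qt) (p : ℝ) (hp0 : 0 ≤ p) (hp1 : p ≤ 1)
    (hpQ : p * (2 * (Qt : ℝ) + 1) ≤ 2 * (Qt : ℝ))
    (c : ℤ → ℝ) (hc_nonneg : ∀ z, 0 ≤ c z)
    (hc_supp : ∀ z : ℤ, Qt < |z| → c z = 0)
    (hc_sum : ∑ z ∈ Finset.Icc (-Qt) Qt, c z = 1)
    (C : ℤ → ℝ)
    (hC : ∀ z : ℤ, -Qt ≤ z → z ≤ Qt →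
      C z = (1 - p) * c z + (p / (2 * (Qt : ℝ))) * (1 - c z)) :
    (∑ z ∈ Finset.Icc (-Qt) (-1), C z + C 0 / 2
        = p / 2 + (1 - p) * (∑ u ∈ Finset.Icc (-Qt) (-1), c u + c 0 / 2) +
          (p / (4 * (Qt : ℝ))) *
            (1 - 2 * (∑ u ∈ Finset.Icc (-Qt) (-1), c u + c 0 / 2))) ∧
    ∑ z ∈ Finset.Icc (-Qt) (-1), C z + C 0 / 2 ≥ p / 2 + p / (4 * (Qt : ℝ)) := by
  have hQ0 : (0:ℝ) < (Qt:ℝ) := by exact_mod_cast hQt.trans_lt' (by norm_num)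
  have hcard : ((Finset.Icc (-Qt) (-1)).card : ℝ) = (Qt:ℝ) := by
    rw [Int.card_Icc, show (-1:ℤ) + 1 - (-Qt) = Qt by ring]
    exact_mod_cast Int.toNat_of_nonneg (by omega)
  set cm := ∑ u ∈ Finset.Icc (-Qt) (-1), c u with hcm
  have h1 : ∑ z ∈ Finset.Icc (-Qt) (-1), C z
      = (1 - p) * cm + (p / (2 * (Qt:ℝ))) * ((Qt:ℝ) - cm) := by
    have e : ∑ z ∈ Finset.Icc (-Qt) (-1), C z
        = ∑ z ∈ Finset.Icc (-Qt) (-1),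
            ((1 - p) * c z + (p / (2 * (Qt:ℝ))) * (1 - c z)) :=
      Finset.sum_congr rfl (fun z hz => by
        rw [Finset.mem_Icc] at hz
        exact hC z hz.1 (by omega))
    rw [e, Finset.sum_add_distrib, ← Finset.mul_sum, ← Finset.mul_sum,
      Finset.sum_sub_distrib, Finset.sum_const, nsmul_eq_mul, mul_one, hcard]
  have hC0 : C 0 = (1 - p) * c 0 + (p / (2 * (Qt:ℝ))) * (1 - c 0) :=
    hC 0 (by omega) (by omega)
  have hcm0 : 0 ≤ cm := Finset.sum_nonneg fun z _ => hc_nonneg z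
  have hS : 0 ≤ cm + c 0 / 2 := by have := hc_nonneg 0; linarith
  have h2Q : (0:ℝ) < 2 * (Qt:ℝ) := by linarith
  have hfac : 0 ≤ 1 - p - p / (2 * (Qt:ℝ)) := by
    have key : p / (2 * (Qt:ℝ)) ≤ 1 - p := by
      rw [div_le_iff₀ h2Q]; nlinarith
    linarith
  constructor
  · rw [h1, hC0]; field_simp; ring
  · rw [h1, hC0]
    have heq : (1 - p) * cm + (p / (2 * (Qt:ℝ))) * ((Qt:ℝ) - cm) +
        ((1 - p) * c 0 + (p / (2 * (Qt:ℝ))) * (1 - c 0)) / 2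
        = p / 2 + p / (4 * (Qt:ℝ)) + (cm + c 0 / 2) * (1 - p - p / (2 * (Qt:ℝ))) := by
      field_simp; ring
    rw [heq]
    nlinarith [mul_nonneg hS hfac]
end

section
/- [Necessary condition for a target error probability, sign-preserving adder] Let Q̃ ≥ 1 be an integer, p ∈ [0,1], and η ≥ 0. Let c : ℤ → ℝ satisfy c(z) ≥ 0 for all z, c(z) = 0 for |z| > Q̃, and Σ_{z=−Q̃}^{Q̃} c(z) = 1. Set c⁻ = Σ_{z=−Q̃}^{−1} c(z) + c(0)/2 and c⁺ = c(0)/2 + Σ_{z=1}^{Q̃} c(z), and define C : {−Q̃,…,Q̃} → ℝ by C(z) = (1−p)·c(z) + (p/Q̃)·(c⁻ − c(z)) for z < 0, C(0) = (1−p)·c(0) + (p/Q̃)·(1 − c(0)), and C(z) = (1−p)·c(z) + (p/Q̃)·(c⁺ − c(z)) for z > 0. If Σ_{z=−Q̃}^{−1} C(z) + C(0)/2 ≤ η, then p ≤ 2·Q̃·η. -/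
/-- Necessary condition `p ≤ 2·Q̃·η` to achieve a target error probability `η`
with a sign-preserving bitwise-XORed noisy adder. -/
theorem stmt12 (Qt : ℤ) (hQt : 1 ≤ Qt) (p : ℝ) (hp0 : 0 ≤ p) (hp1 : p ≤ 1)
    (η : ℝ) (hη : 0 ≤ η)
    (c : ℤ → ℝ) (hc_nonneg : ∀ z, 0 ≤ c z)
    (hc_supp : ∀ z : ℤ, Qt < |z| → c z = 0)
    (hc_sum : ∑ z ∈ Finset.Icc (-Qt) Qt, c z = 1)
    (C : ℤ → ℝ)
    (hCneg : ∀ z : ℤ, -Qt ≤ z → z < 0 →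
      C z = (1 - p) * c z +
        (p / (Qt : ℝ)) * ((∑ u ∈ Finset.Icc (-Qt) (-1), c u + c 0 / 2) - c z))
    (hC0 : C 0 = (1 - p) * c 0 + (p / (Qt : ℝ)) * (1 - c 0))
    (hCpos : ∀ z : ℤ, 0 < z → z ≤ Qt →
      C z = (1 - p) * c z +
        (p / (Qt : ℝ)) * ((c 0 / 2 + ∑ u ∈ Finset.Icc 1 Qt, c u) - c z))
    (htarget : ∑ z ∈ Finset.Icc (-Qt) (-1), C z + C 0 / 2 ≤ η) :
    p ≤ 2 * (Qt : ℝ) * η := by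
  set Sn : ℝ := ∑ u ∈ Finset.Icc (-Qt) (-1), c u with hSn
  set Sp : ℝ := ∑ u ∈ Finset.Icc 1 Qt, c u with hSp
  have hQR : (1 : ℝ) ≤ (Qt : ℝ) := by exact_mod_cast hQt
  have hQpos : (0 : ℝ) < (Qt : ℝ) := by linarith
  -- split the total sum
  have hsplit : Sn + c 0 + Sp = 1 := by
    have h1 : Finset.Icc (-Qt) Qt = Finset.Icc (-Qt) (-1) ∪ Finset.Icc 0 Qt := by
      ext x; simp only [Finset.mem_Icc, Finset.mem_union]; omega
    have hdisj : Disjoint (Finset.Icc (-Qt) (-1)) (Finset.Icc 0 Qt) := by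
      rw [Finset.disjoint_left]; intro a ha hb
      simp only [Finset.mem_Icc] at ha hb; omega
    have h2 : Finset.Icc (0 : ℤ) Qt = insert 0 (Finset.Icc 1 Qt) := by
      ext x; simp only [Finset.mem_Icc, Finset.mem_insert]; omega
    have h3 : (0 : ℤ) ∉ Finset.Icc (1 : ℤ) Qt := by simp
    rw [h1, Finset.sum_union hdisj, h2, Finset.sum_insert h3] at hc_sum
    linarith [hc_sum]
  have hSn_nonneg : 0 ≤ Sn := Finset.sum_nonneg fun i _ => hc_nonneg i
  have hSp_nonneg : 0 ≤ Sp := Finset.sum_nonneg fun i _ => hc_nonneg i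
  have hc0 : 0 ≤ c 0 := hc_nonneg 0
  -- card of negative range
  have hcard : ((Finset.Icc (-Qt) (-1)).card : ℝ) = (Qt : ℝ) := by
    rw [Int.card_Icc]
    have : (-1 + 1 - -Qt) = Qt := by ring
    rw [this]
    have : (Qt.toNat : ℤ) = Qt := Int.toNat_of_nonneg (by omega)
    exact_mod_cast this
  -- sum of C over negatives
  have hsumC : ∑ z ∈ Finset.Icc (-Qt) (-1), C z
      = (1 - p) * Sn + (p / (Qt : ℝ)) * ((Qt : ℝ) * (Sn + c 0 / 2) - Sn) := by
    have : ∑ z ∈ Finset.Icc (-Qt) (-1), C z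
        = ∑ z ∈ Finset.Icc (-Qt) (-1),
            ((1 - p) * c z + (p / (Qt : ℝ)) * ((Sn + c 0 / 2) - c z)) := by
      apply Finset.sum_congr rfl
      intro z hz
      simp only [Finset.mem_Icc] at hz
      exact hCneg z hz.1 (by omega)
    rw [this]
    rw [Finset.sum_add_distrib, ← Finset.mul_sum, ← Finset.mul_sum]
    rw [Finset.sum_sub_distrib, Finset.sum_const, nsmul_eq_mul, hcard]
  have key : p / (2 * (Qt : ℝ)) ≤ ∑ z ∈ Finset.Icc (-Qt) (-1), C z + C 0 / 2 := by
    rw [hsumC, hC0]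
    have hpQ : p / (Qt : ℝ) ≤ 1 := by
      rw [div_le_one hQpos]; linarith
    have expand : (1 - p) * Sn + (p / (Qt : ℝ)) * ((Qt : ℝ) * (Sn + c 0 / 2) - Sn)
        + ((1 - p) * c 0 + (p / (Qt : ℝ)) * (1 - c 0)) / 2
        = p / (2 * (Qt : ℝ)) + (1 - p / (Qt : ℝ)) * (Sn + c 0 / 2) := by
      field_simp
      ring
    rw [expand]
    nlinarith [mul_nonneg (by linarith : (0:ℝ) ≤ 1 - p / (Qt : ℝ)) (by linarith : (0:ℝ) ≤ Sn + c 0 / 2)]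
  have : p / (2 * (Qt : ℝ)) ≤ η := le_trans key htarget
  rw [div_le_iff₀ (by linarith)] at this
  linarith
end

section
/- [Necessary condition for a target error probability, full-depth adder] Let Q̃ ≥ 1 be an integer, η ≥ 0, and p ∈ [0,1] with p·(2Q̃ + 1) ≤ 2Q̃. Let c : ℤ → ℝ satisfy c(z) ≥ 0 for all z, c(z) = 0 for |z| > Q̃, and Σ_{z=−Q̃}^{Q̃} c(z) = 1. Define C : {−Q̃,…,Q̃} → ℝ by C(z) = (1−p)·c(z) + (p/(2Q̃))·(1 − c(z)) for every z. If Σ_{z=−Q̃}^{−1} C(z) + C(0)/2 ≤ η, then p ≤ 4·Q̃·η/(2Q̃ + 1). -/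
/-- Necessary condition `p ≤ 4·Q̃·η/(2Q̃+1)` to achieve a target error
probability `η` with a full-depth bitwise-XORed noisy adder. -/
theorem stmt13 (Qt : ℤ) (hQt : 1 ≤ Qt) (η : ℝ) (hη : 0 ≤ η)
    (p : ℝ) (hp0 : 0 ≤ p) (hp1 : p ≤ 1)
    (hpQ : p * (2 * (Qt : ℝ) + 1) ≤ 2 * (Qt : ℝ))
    (c : ℤ → ℝ) (hc_nonneg : ∀ z, 0 ≤ c z)
    (hc_supp : ∀ z : ℤ, Qt < |z| → c z = 0)
    (hc_sum : ∑ z ∈ Finset.Icc (-Qt) Qt, c z = 1)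
    (C : ℤ → ℝ)
    (hC : ∀ z : ℤ, -Qt ≤ z → z ≤ Qt →
      C z = (1 - p) * c z + (p / (2 * (Qt : ℝ))) * (1 - c z))
    (htarget : ∑ z ∈ Finset.Icc (-Qt) (-1), C z + C 0 / 2 ≤ η) :
    p ≤ 4 * (Qt : ℝ) * η / (2 * (Qt : ℝ) + 1) := by
  have hQR : (1:ℝ) ≤ (Qt:ℝ) := by exact_mod_cast hQt
  have hQpos : (0:ℝ) < (Qt:ℝ) := by linarith
  set S := ∑ z ∈ Finset.Icc (-Qt) (-1), c z with hS
  have hSnonneg : 0 ≤ S := Finset.sum_nonneg fun z _ => hc_nonneg z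
  have hcard : ((Finset.Icc (-Qt) (-1)).card : ℝ) = (Qt:ℝ) := by
    rw [Int.card_Icc]
    have h : (-1 + 1 - -Qt) = Qt := by ring
    rw [h]
    exact_mod_cast congrArg (Int.cast : ℤ → ℝ) (Int.toNat_of_nonneg (by linarith : (0:ℤ) ≤ Qt))
  have hsum : ∑ z ∈ Finset.Icc (-Qt) (-1), C z
      = (1 - p) * S + (p / (2 * (Qt:ℝ))) * ((Qt:ℝ) - S) := by
    have hcongr : ∀ z ∈ Finset.Icc (-Qt) (-1),
        C z = (1 - p) * c z + (p / (2 * (Qt : ℝ))) * (1 - c z) := by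
      intro z hz
      simp only [Finset.mem_Icc] at hz
      exact hC z hz.1 (by linarith [hz.2])
    rw [Finset.sum_congr rfl hcongr, Finset.sum_add_distrib,
      ← Finset.mul_sum, ← Finset.mul_sum, ← hS, Finset.sum_sub_distrib,
      Finset.sum_const, nsmul_eq_mul, hcard, ← hS]
    ring
  have hC0 : C 0 = (1 - p) * c 0 + (p / (2 * (Qt:ℝ))) * (1 - c 0) :=
    hC 0 (by linarith) (by linarith)
  have hc0 : 0 ≤ c 0 := hc_nonneg 0
  -- key inequality
  have hfac : 0 ≤ 2 * (Qt:ℝ) - p * (2 * (Qt:ℝ) + 1) := by linarith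
  have hA : 0 ≤ 2 * S + c 0 := by linarith
  have hkey : p * (2 * (Qt:ℝ) + 1) ≤ 4 * (Qt:ℝ) * η := by
    have h4 : 4 * (Qt:ℝ) * (∑ z ∈ Finset.Icc (-Qt) (-1), C z + C 0 / 2)
        ≤ 4 * (Qt:ℝ) * η := by
      apply mul_le_mul_of_nonneg_left htarget (by linarith)
    rw [hsum, hC0] at h4
    have hne : (2 * (Qt:ℝ)) ≠ 0 := by positivity
    have hmul : 0 ≤ (2 * S + c 0) * (2 * (Qt:ℝ) - p * (2 * (Qt:ℝ) + 1)) :=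
      mul_nonneg hA hfac
    have h5 : 4 * (Qt:ℝ) * ((1 - p) * S + p / (2 * (Qt:ℝ)) * ((Qt:ℝ) - S)
        + ((1 - p) * c 0 + p / (2 * (Qt:ℝ)) * (1 - c 0)) / 2)
        = 4 * (Qt:ℝ) * (1 - p) * S + 2 * p * ((Qt:ℝ) - S)
          + 2 * (Qt:ℝ) * (1 - p) * c 0 + p * (1 - c 0) := by
      field_simp
      ring
    nlinarith [hmul, h4, h5]
  rw [le_div_iff₀ (by linarith : (0:ℝ) < 2 * (Qt:ℝ) + 1)]
  linarith
end
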